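/- Let a₁ ∈ ℝ, ε ∈ {-1,1}, Δ(a) = ε(a-a₁), and let I ⊆ ℝ be an open interval on which Δ > 0. For every smooth function F on I and every k ∈ ℕ, one has (Op_k[F] (Δ^{-1/2}))(a) = Δ(a)^{1/2} · (1/k!) · D_a^k (F/Δ)(a) for all a ∈ I, where D_a^k denotes the k-th derivative. -/

import Mathlib

open Polynomial

/-- The Pochhammer symbol `(1/2)_s`. -/
noncomputable def poch (s : ℕ) : ℝ := (ascPochhammer ℝ s).eval (1/2 : ℝ)

/-- The operator `Op_n[F]` acting on `h`, with derivatives taken within the set `I`. -/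
noncomputable def OpW (I : Set ℝ) (n : ℕ) (F h : ℝ → ℝ) (a : ℝ) : ℝ :=
  ∑ s ∈ Finset.range (n + 1),
    iteratedDerivWithin (n - s) F I a / (Nat.factorial (n - s) : ℝ) *
      (iteratedDerivWithin s h I a / poch s)

lemma poch_pos (s : ℕ) : 0 < poch s := by
  induction s with
  | zero => simp [poch]
  | succ n ih =>
    rw [poch, ascPochhammer_succ_eval]
    exact mul_pos ih (by positivity)

lemma poch_succ (s : ℕ) : poch (s + 1) = poch s * (1/2 + s) := by
  rw [poch, poch, ascPochhammer_succ_eval]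

lemma hasDerivAt_delta_rpow (ε a₁ r a : ℝ) (ha : ε * (a - a₁) ≠ 0) :
    HasDerivAt (fun t => (ε * (t - a₁)) ^ r) (r * (ε * (a - a₁)) ^ (r - 1) * ε) a := by
  have h1 : HasDerivAt (fun t : ℝ => ε * (t - a₁)) ε a := by
    simpa using ((hasDerivAt_id a).sub_const a₁).const_mul ε
  exact (Real.hasDerivAt_rpow_const (p := r) (Or.inl ha)).comp a h1

lemma desc_rec (k s : ℕ) :
    (k+1).descFactorial (s+1) = k.descFactorial (s+1) + (s+1) * k.descFactorial s := by
  rw [Nat.succ_descFactorial_succ, Nat.descFactorial_succ, ← Nat.add_mul]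
  rcases le_or_gt s k with h | h
  · congr 1; omega
  · simp [Nat.descFactorial_of_lt h]

lemma lemA (a₁ ε : ℝ) (I : Set ℝ) (hIopen : IsOpen I)
    (hΔ : ∀ a ∈ I, 0 < ε * (a - a₁)) (s : ℕ) :
    ∀ a ∈ I, iteratedDerivWithin s (fun t => (ε * (t - a₁)) ^ (-(1/2) : ℝ)) I a
      = (-ε) ^ s * poch s * (ε * (a - a₁)) ^ (-(1/2) - s : ℝ) := by
  induction s with
  | zero => intro a ha; simp [poch]
  | succ n ih =>
    intro a ha
    have hud : UniqueDiffWithinAt ℝ I a := hIopen.uniqueDiffWithinAt ha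
    rw [iteratedDerivWithin_succ,
      derivWithin_congr (fun x hx => ih x hx) (ih a ha),
      derivWithin_of_isOpen hIopen ha]
    have hd : HasDerivAt
        (fun x : ℝ => (-ε) ^ n * poch n * (ε * (x - a₁)) ^ (-(1/2) - n : ℝ))
        ((-ε) ^ n * poch n *
          ((-(1/2) - n) * (ε * (a - a₁)) ^ ((-(1/2) - n) - 1 : ℝ) * ε)) a :=
      (hasDerivAt_delta_rpow ε a₁ (-(1/2) - n) a (ne_of_gt (hΔ a ha))).const_mul _
    rw [hd.deriv, poch_succ]
    rw [show ((-(1/2) - n) - 1 : ℝ) = -(1/2) - ((n : ℕ) + 1 : ℕ) by push_cast; ring]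
    push_cast
    ring

lemma hasDerivAt_iter (I : Set ℝ) (hIopen : IsOpen I) (F : ℝ → ℝ)
    (hF : ContDiffOn ℝ (⊤ : ℕ∞) F I) (m : ℕ) {a : ℝ} (ha : a ∈ I) :
    HasDerivAt (iteratedDerivWithin m F I) (iteratedDerivWithin (m+1) F I a) a := by
  have hdiff : DifferentiableAt ℝ (iteratedDerivWithin m F I) a :=
    ((hF.differentiableOn_iteratedDerivWithin (by exact_mod_cast ENat.coe_lt_top m)
      hIopen.uniqueDiffOn) a ha).differentiableAt (hIopen.mem_nhds ha)
  have h := hdiff.hasDerivAt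
  rwa [← derivWithin_of_isOpen hIopen ha,
    ← iteratedDerivWithin_succ] at h

lemma sum_shuffle (k : ℕ) (P R W : ℕ → ℝ) (hR0 : R 0 = 0) (hP : P (k+1) = 0)
    (hW : ∀ s, W s = P s + R s) :
    ∑ s ∈ Finset.range (k+1), (P s + R (s+1)) = ∑ s ∈ Finset.range (k+2), W s := by
  simp only [hW]
  rw [Finset.sum_add_distrib, Finset.sum_add_distrib, Finset.sum_range_succ P (k+1),
    Finset.sum_range_succ' R (k+1), hP, hR0]
  ring

lemma lemB (a₁ ε : ℝ) (I : Set ℝ) (hIopen : IsOpen I)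
    (hΔ : ∀ a ∈ I, 0 < ε * (a - a₁)) (F : ℝ → ℝ)
    (hF : ContDiffOn ℝ (⊤ : ℕ∞) F I) (k : ℕ) :
    ∀ a ∈ I, iteratedDerivWithin k (fun t => F t / (ε * (t - a₁))) I a
      = ∑ s ∈ Finset.range (k+1), (k.descFactorial s : ℝ) * (-ε) ^ s *
          (iteratedDerivWithin (k-s) F I a * (ε * (a - a₁)) ^ (-1 - s : ℝ)) := by
  induction k with
  | zero =>
    intro a ha
    simp [Real.rpow_neg_one, div_eq_mul_inv]
  | succ k ih =>
    intro a ha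
    have hΔa := hΔ a ha
    have hud : UniqueDiffWithinAt ℝ I a := hIopen.uniqueDiffWithinAt ha
    rw [iteratedDerivWithin_succ,
      derivWithin_congr (fun x hx => ih x hx) (ih a ha),
      derivWithin_of_isOpen hIopen ha]
    have hsum : HasDerivAt (fun x => ∑ s ∈ Finset.range (k+1),
        (k.descFactorial s : ℝ) * (-ε) ^ s *
          (iteratedDerivWithin (k-s) F I x * (ε * (x - a₁)) ^ (-1 - s : ℝ)))
        (∑ s ∈ Finset.range (k+1),
          ((k.descFactorial s : ℝ) * (-ε) ^ s *
             (iteratedDerivWithin (k+1-s) F I a * (ε * (a - a₁)) ^ (-1 - s : ℝ))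
           + (((s+1) * Nat.descFactorial k (s+1-1) : ℕ) : ℝ) * (-ε) ^ (s+1) *
             (iteratedDerivWithin (k+1-(s+1)) F I a *
               (ε * (a - a₁)) ^ (-1 - ((s+1 : ℕ) : ℝ))))) a := by
      apply HasDerivAt.fun_sum
      intro s hs
      have hs' : s ≤ k := Nat.lt_succ_iff.mp (Finset.mem_range.mp hs)
      have heq : ((k.descFactorial s : ℝ) * (-ε) ^ s *
             (iteratedDerivWithin (k+1-s) F I a * (ε * (a - a₁)) ^ (-1 - s : ℝ))
           + (((s+1) * Nat.descFactorial k (s+1-1) : ℕ) : ℝ) * (-ε) ^ (s+1) *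
             (iteratedDerivWithin (k+1-(s+1)) F I a *
               (ε * (a - a₁)) ^ (-1 - ((s+1 : ℕ) : ℝ))))
          = ((k.descFactorial s : ℝ) * (-ε) ^ s) *
              (iteratedDerivWithin (k-s+1) F I a * (ε * (a - a₁)) ^ (-1 - (s:ℝ))
               + iteratedDerivWithin (k-s) F I a *
                 ((-1 - (s:ℝ)) * (ε * (a - a₁)) ^ ((-1 - (s:ℝ)) - 1) * ε)) := by
        rw [show k - s + 1 = k + 1 - s from by omega,
          show k + 1 - (s+1) = k - s from by omega,
          show s + 1 - 1 = s from rfl]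
        push_cast
        rw [show (-1 - ((s:ℝ)+1)) = (-1 - (s:ℝ)) - 1 by ring]
        ring
      rw [heq]
      exact ((hasDerivAt_iter I hIopen F hF (k-s) ha).mul
        (hasDerivAt_delta_rpow ε a₁ (-1 - (s:ℝ)) a (ne_of_gt hΔa))).const_mul _
    rw [hsum.deriv]
    exact sum_shuffle k
      (fun s => (k.descFactorial s : ℝ) * (-ε) ^ s *
        (iteratedDerivWithin (k+1-s) F I a * (ε * (a - a₁)) ^ (-1 - s : ℝ)))
      (fun s => ((s * Nat.descFactorial k (s-1) : ℕ) : ℝ) * (-ε) ^ s *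
        (iteratedDerivWithin (k+1-s) F I a * (ε * (a - a₁)) ^ (-1 - s : ℝ)))
      (fun s => ((k+1).descFactorial s : ℝ) * (-ε) ^ s *
        (iteratedDerivWithin (k+1-s) F I a * (ε * (a - a₁)) ^ (-1 - s : ℝ)))
      (by simp)
      (by simp [Nat.descFactorial_of_lt (Nat.lt_succ_self k)])
      (by
        intro s
        cases s with
        | zero => simp
        | succ n =>
          have := desc_rec k n
          have hcast : (((k+1).descFactorial (n+1) : ℕ) : ℝ)
              = (k.descFactorial (n+1) : ℝ) + (((n+1) * k.descFactorial n : ℕ) : ℝ) := by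
            rw [this]; push_cast; ring
          simp only [hcast, show n + 1 - 1 = n from rfl]
          push_cast
          ring)

/-- With `Δ(a) = ε(a-a₁) > 0` on the open interval `I`, for every smooth `F`
on `I` and every `k ∈ ℕ`, `(Op_k[F] Δ^{-1/2})(a) = Δ(a)^{1/2} · (1/k!) · D_a^k (F/Δ)(a)`. -/
theorem stmt2 (a₁ ε : ℝ) (hε : ε = 1 ∨ ε = -1)
    (I : Set ℝ) (hIopen : IsOpen I) (hIconn : I.OrdConnected)
    (hΔ : ∀ a ∈ I, 0 < ε * (a - a₁))
    (F : ℝ → ℝ) (hF : ContDiffOn ℝ (⊤ : ℕ∞) F I) (k : ℕ) :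
    ∀ a ∈ I,
      OpW I k F (fun t => (ε * (t - a₁)) ^ (-(1/2) : ℝ)) a =
        (ε * (a - a₁)) ^ ((1/2) : ℝ) * ((1 : ℝ) / (Nat.factorial k : ℝ)) *
          iteratedDerivWithin k (fun t => F t / (ε * (t - a₁))) I a := by
  intro a ha
  have hΔa := hΔ a ha
  rw [lemB a₁ ε I hIopen hΔ F hF k a ha, OpW, Finset.mul_sum]
  refine Finset.sum_congr rfl ?_
  intro s hs
  have hs' : s ≤ k := Nat.lt_succ_iff.mp (Finset.mem_range.mp hs)
  rw [lemA a₁ ε I hIopen hΔ s a ha]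
  have hpoch := (poch_pos s).ne'
  have hfac : ((k - s).factorial : ℝ) ≠ 0 := by positivity
  have hdesc : ((k - s).factorial : ℝ) * (k.descFactorial s : ℝ) = (k.factorial : ℝ) := by
    exact_mod_cast congrArg (Nat.cast : ℕ → ℝ) (Nat.factorial_mul_descFactorial hs')
  have hkfac : ((k.factorial : ℝ)) ≠ 0 := by positivity
  have hrpow : (ε * (a - a₁)) ^ ((1/2) : ℝ) * (ε * (a - a₁)) ^ (-1 - (s:ℝ))
      = (ε * (a - a₁)) ^ (-(1/2) - (s:ℝ)) := by
    rw [← Real.rpow_add hΔa]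
    congr 1
    ring
  rw [← hrpow]
  field_simp

  linear_combination -(iteratedDerivWithin (k-s) F I a * (-ε)^s) * hdesc
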